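/- Let k₀, c₃ be real constants with k₀² + c₃² ≠ 0, let w be twice differentiable, and define u(t,x,y) = w(z)/(c₃ + k₀t)² with z = x(c₃ + k₀t), on a region where c₃ + k₀t ≠ 0. Then u satisfies the ZK equation u_{xt} − (u u_x)_x − u_{yy} = 0 if and only if w satisfies k₀w'(z) + w'(z)² + (w(z) − z·k₀)w''(z) = 0 at the corresponding z. -/

import Mathlib

/-- The Zabolotskaya–Khokhlov equation `u_{xt} − (u u_x)_x − u_{yy} = 0`
at the point `(t,x,y)`. -/
noncomputable def ZK (u : ℝ → ℝ → ℝ → ℝ) (t x y : ℝ) : Prop :=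
  deriv (fun x' => deriv (fun t' => u t' x' y) t) x
    - deriv (fun x' => u t x' y * deriv (fun x'' => u t x'' y) x') x
    - deriv (fun y' => deriv (fun y'' => u t x y'') y') y = 0

theorem reduction_L27 (k₀ c₃ : ℝ) (hk : k₀ ^ 2 + c₃ ^ 2 ≠ 0)
    (w : ℝ → ℝ) (hw : ContDiff ℝ 2 w)
    (t x y : ℝ) (ht : c₃ + k₀ * t ≠ 0) :
    ZK (fun t x _ => w (x * (c₃ + k₀ * t)) / (c₃ + k₀ * t) ^ 2) t x y ↔
      (fun z => k₀ * deriv w z + (deriv w z) ^ 2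
          + (w z - z * k₀) * deriv (deriv w) z = 0) (x * (c₃ + k₀ * t)) := by
  have hw1 : Differentiable ℝ w := hw.differentiable two_ne_zero
  have hw2 : Differentiable ℝ (deriv w) :=
    (contDiff_succ_iff_deriv.mp
      (show ContDiff ℝ (1+1) w by exact_mod_cast hw)).2.2.differentiable one_ne_zero
  have hlin : ∀ (b s : ℝ), HasDerivAt (fun r : ℝ => r * b) b s := fun b s => by
    simpa using (hasDerivAt_id s).mul_const b
  set a : ℝ := c₃ + k₀ * t with ha
  -- inner x-derivative
  have hux : ∀ x' : ℝ, deriv (fun x'' => w (x'' * a) / a ^ 2) x'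
      = deriv w (x' * a) * a / a ^ 2 := by
    intro x'
    have h1 : HasDerivAt (fun x'' => w (x'' * a)) (deriv w (x' * a) * a) x' :=
      (hw1 (x' * a)).hasDerivAt.comp x' (hlin a x')
    exact (h1.div_const (a ^ 2)).deriv
  -- inner t-derivative
  have hut : ∀ x' : ℝ, deriv (fun t' => w (x' * (c₃ + k₀ * t')) / (c₃ + k₀ * t') ^ 2) t
      = (deriv w (x' * a) * (x' * k₀) * a ^ 2 - w (x' * a) * (2 * a * k₀)) / (a ^ 2) ^ 2 := by
    intro x'
    have hl : HasDerivAt (fun t' => c₃ + k₀ * t') k₀ t := by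
      simpa using ((hasDerivAt_id t).const_mul k₀).const_add c₃
    have hin : HasDerivAt (fun t' => x' * (c₃ + k₀ * t')) (x' * k₀) t := by
      simpa using hl.const_mul x'
    have hnum : HasDerivAt (fun t' => w (x' * (c₃ + k₀ * t'))) (deriv w (x' * a) * (x' * k₀)) t :=
      (hw1 (x' * a)).hasDerivAt.comp t hin
    have hden : HasDerivAt (fun t' => (c₃ + k₀ * t') ^ 2) (2 * a * k₀) t := by
      have := hl.fun_pow 2
      simpa [mul_comm, mul_assoc] using this
    exact (hnum.div hden (pow_ne_zero 2 ht)).deriv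
  unfold ZK
  -- y-part is zero
  have hy : deriv (fun y' => deriv
      (fun _ : ℝ => w (x * a) / a ^ 2) y') y = 0 := by
    simp [deriv_const]
  -- first term
  have h1 : deriv (fun x' => deriv
      (fun t' => w (x' * (c₃ + k₀ * t')) / (c₃ + k₀ * t') ^ 2) t) x
      = (deriv (deriv w) (x * a) * a * (x * k₀) + deriv w (x * a) * k₀) * a ^ 2
          / (a ^ 2) ^ 2
        - deriv w (x * a) * a * (2 * a * k₀) / (a ^ 2) ^ 2 := by
    have heq : (fun x' => deriv
        (fun t' => w (x' * (c₃ + k₀ * t')) / (c₃ + k₀ * t') ^ 2) t)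
        = fun x' => (deriv w (x' * a) * (x' * k₀) * a ^ 2
            - w (x' * a) * (2 * a * k₀)) / (a ^ 2) ^ 2 := funext hut
    rw [heq]
    have hdw : HasDerivAt (fun x' => deriv w (x' * a)) (deriv (deriv w) (x * a) * a) x :=
      (hw2 (x * a)).hasDerivAt.comp (h₂ := deriv w) x (hlin a x)
    have hdw2 : HasDerivAt (fun x' => w (x' * a)) (deriv w (x * a) * a) x :=
      (hw1 (x * a)).hasDerivAt.comp x (hlin a x)
    have hxk : HasDerivAt (fun x' : ℝ => x' * k₀) k₀ x := hlin k₀ x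
    have h := (((hdw.fun_mul hxk).mul_const (a ^ 2)).fun_sub
      (hdw2.mul_const (2 * a * k₀))).div_const ((a ^ 2) ^ 2)
    have := h.deriv
    rw [this]
    ring
  -- second term
  have h2 : deriv (fun x' => w (x' * a) / a ^ 2 *
      deriv (fun x'' => w (x'' * a) / a ^ 2) x') x
      = (deriv w (x * a) * a) / a ^ 2 * (deriv w (x * a) * a / a ^ 2)
        + w (x * a) / a ^ 2 * (deriv (deriv w) (x * a) * a * a / a ^ 2) := by
    have heq : (fun x' => w (x' * a) / a ^ 2 *
        deriv (fun x'' => w (x'' * a) / a ^ 2) x')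
        = fun x' => w (x' * a) / a ^ 2 * (deriv w (x' * a) * a / a ^ 2) := by
      funext x'
      rw [hux x']
    rw [heq]
    have hdw2 : HasDerivAt (fun x' => w (x' * a) / a ^ 2) (deriv w (x * a) * a / a ^ 2) x :=
      (((hw1 (x * a)).hasDerivAt.comp x (hlin a x)).div_const (a ^ 2))
    have hdw : HasDerivAt (fun x' => deriv w (x' * a) * a / a ^ 2)
        (deriv (deriv w) (x * a) * a * a / a ^ 2) x :=
      ((((hw2 (x * a)).hasDerivAt.comp x (hlin a x)).mul_const a).div_const
        (a ^ 2))
    exact (hdw2.fun_mul hdw).deriv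
  rw [h1, h2, hy]
  have key : (deriv (deriv w) (x * a) * a * (x * k₀) + deriv w (x * a) * k₀) * a ^ 2
          / (a ^ 2) ^ 2
        - deriv w (x * a) * a * (2 * a * k₀) / (a ^ 2) ^ 2
        - ((deriv w (x * a) * a) / a ^ 2 * (deriv w (x * a) * a / a ^ 2)
          + w (x * a) / a ^ 2 * (deriv (deriv w) (x * a) * a * a / a ^ 2)) - 0
      = -((k₀ * deriv w (x * a) + (deriv w (x * a)) ^ 2
          + (w (x * a) - (x * a) * k₀) * deriv (deriv w) (x * a)) / a ^ 2) := by
    field_simp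
    ring
  rw [key]
  rw [neg_eq_zero, div_eq_zero_iff]
  exact or_iff_left (pow_ne_zero 2 ht)
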